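/- Let X₁, X₂, X_c be independent random variables each with density (1/2)e^{-x/2} on (0,∞), let L₁, L₂, L_c, σ² > 0, γ₁, γ₂ ∈ (0,1) with γ₁ + γ₂ = 1, and ε₁, ε₂ > 0 with γ₁/γ₂ > ε₁ and ε₂/γ₂ < ε₁/(γ₁ − ε₁γ₂). Define V₁,₁ = γ₁L₁X₁/(γ₂L₁X₁ + 2σ²), V₂,₁ = γ₁L₂X₂/(γ₂L₂X₂ + 2σ²), V₂,₂ = γ₂L₂X₂/(2σ²), W₂ = L_cX_c/(2σ²), and ξ = σ²ε₁/(γ₁ − ε₁γ₂). Then the outage probability of the strong user in bi-directional cooperative NOMA satisfies P{ (V₂,₂ < ε₂ or V₂,₁ < ε₁) and V₁,₁ < ε₁ } + P{ (V₂,₂ < ε₂ or max{V₂,₁, W₂} < ε₁) and V₁,₁ > ε₁ } = (1 − e^{−ξ/L₂}) − e^{−σ²ε₁/L_c − ξ/L₁}·(e^{−σ²ε₂/(γ₂L₂)} − e^{−ξ/L₂}). -/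

import Mathlib

open Real MeasureTheory Set

/-- Joint density of three independent exponential(mean 2) random variables. -/
noncomputable def dens3 (p : ℝ × ℝ × ℝ) : ℝ :=
  ((1/2) * Real.exp (-p.1/2)) * ((1/2) * Real.exp (-p.2.1/2)) * ((1/2) * Real.exp (-p.2.2/2))

noncomputable def fexp (x : ℝ) : ℝ := (1/2) * Real.exp (-x/2)

lemma dens3_eq (p : ℝ × ℝ × ℝ) : dens3 p = fexp p.1 * (fexp p.2.1 * fexp p.2.2) := by
  unfold dens3 fexp; ring

lemma fexp_cont : Continuous fexp :=
  continuous_const.mul ((continuous_id.neg.div_const 2).rexp)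

lemma fexp_hasDeriv (x : ℝ) : HasDerivAt (fun y => -Real.exp (-y/2)) (fexp x) x := by
  have h1 : HasDerivAt (fun y : ℝ => -y/2) (-1/2) x := by
    simpa using ((hasDerivAt_id x).neg.div_const 2)
  have h2 := (Real.hasDerivAt_exp (-x/2)).comp x h1
  have := h2.neg
  refine this.congr_deriv ?_
  unfold fexp; ring

lemma fexp_int_ab (a b : ℝ) : ∫ x in a..b, fexp x = Real.exp (-a/2) - Real.exp (-b/2) := by
  have := intervalIntegral.integral_eq_sub_of_hasDerivAt (a := a) (b := b)
    (f := fun y => -Real.exp (-y/2)) (f' := fexp)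
    (fun x _ => fexp_hasDeriv x) (fexp_cont.intervalIntegrable a b)
  rw [this]; ring

lemma fexp_int_Ioo {a b : ℝ} (h : a ≤ b) :
    ∫ x in Ioo a b, fexp x = Real.exp (-a/2) - Real.exp (-b/2) := by
  rw [← integral_Ioc_eq_integral_Ioo, ← intervalIntegral.integral_of_le h, fexp_int_ab]

lemma fexp_int_Ico {a b : ℝ} (h : a ≤ b) :
    ∫ x in Ico a b, fexp x = Real.exp (-a/2) - Real.exp (-b/2) := by
  rw [integral_Ico_eq_integral_Ioo, fexp_int_Ioo h]

lemma fexp_intOn_Ioi (a : ℝ) : IntegrableOn fexp (Ioi a) := by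
  have : IntegrableOn (fun x => Real.exp (-(1/2) * x)) (Ioi a) :=
    exp_neg_integrableOn_Ioi a (by norm_num)
  have h2 := this.const_mul (1/2 : ℝ)
  refine h2.congr (Filter.Eventually.of_forall fun x => by unfold fexp; ring_nf)

lemma fexp_intOn {s : Set ℝ} (hs : s ⊆ Ioi (0:ℝ)) : IntegrableOn fexp s :=
  (fexp_intOn_Ioi 0).mono_set hs

lemma fexp_tendsto : Filter.Tendsto (fun y : ℝ => -Real.exp (-y/2)) Filter.atTop (nhds 0) := by
  have h : Filter.Tendsto (fun y : ℝ => -y/2) Filter.atTop Filter.atBot := by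
    apply Filter.Tendsto.atBot_div_const (by norm_num)
    exact Filter.tendsto_neg_atBot_iff.mpr Filter.tendsto_id
  have := Real.tendsto_exp_atBot.comp h
  simpa using this.neg

lemma fexp_int_Ioi (a : ℝ) : ∫ x in Ioi a, fexp x = Real.exp (-a/2) := by
  have := MeasureTheory.integral_Ioi_of_hasDerivAt_of_tendsto
    (f := fun y => -Real.exp (-y/2)) (f' := fexp) (a := a) (m := 0)
    (((continuous_id.neg.div_const 2).rexp.neg).continuousWithinAt)
    (fun x _ => fexp_hasDeriv x) (fexp_intOn_Ioi a) fexp_tendsto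
  simpa using this

lemma cond_lt {σ2 γ1 γ2 ε1 L x : ℝ} (hσ : 0 < σ2) (hγ2 : 0 < γ2) (hL : 0 < L)
    (hd : 0 < γ1 - ε1*γ2) (hx : 0 < x) :
    γ1*L*x/(γ2*L*x+2*σ2) < ε1 ↔ x < 2*(σ2*ε1/(γ1-ε1*γ2))/L := by
  have hden : 0 < γ2*L*x+2*σ2 := by nlinarith [mul_pos (mul_pos hγ2 hL) hx]
  have key : 2*(σ2*ε1/(γ1-ε1*γ2))/L * ((γ1-ε1*γ2)*L) = 2*(σ2*ε1) := by
    field_simp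
  rw [div_lt_iff₀ hden]
  constructor
  · intro h; nlinarith [mul_pos hd hL]
  · intro h; nlinarith [mul_pos hd hL]

lemma cond_gt {σ2 γ1 γ2 ε1 L x : ℝ} (hσ : 0 < σ2) (hγ2 : 0 < γ2) (hL : 0 < L)
    (hd : 0 < γ1 - ε1*γ2) (hx : 0 < x) :
    ε1 < γ1*L*x/(γ2*L*x+2*σ2) ↔ 2*(σ2*ε1/(γ1-ε1*γ2))/L < x := by
  have hden : 0 < γ2*L*x+2*σ2 := by nlinarith [mul_pos (mul_pos hγ2 hL) hx]
  have key : 2*(σ2*ε1/(γ1-ε1*γ2))/L * ((γ1-ε1*γ2)*L) = 2*(σ2*ε1) := by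
    field_simp
  rw [lt_div_iff₀ hden]
  constructor
  · intro h; nlinarith [mul_pos hd hL]
  · intro h; nlinarith [mul_pos hd hL]

lemma cond_simple {σ2 ε K x : ℝ} (hσ : 0 < σ2) (hK : 0 < K) :
    K*x/(2*σ2) < ε ↔ x < 2*(σ2*ε)/K := by
  rw [div_lt_iff₀ (by linarith), lt_div_iff₀ hK]
  constructor <;> intro h <;> nlinarith

lemma int_prod2 (A B : Set ℝ) :
    ∫ q in A ×ˢ B, fexp q.1 * fexp q.2
      = (∫ x in A, fexp x) * (∫ x in B, fexp x) := by
  rw [MeasureTheory.Measure.volume_eq_prod]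
  exact setIntegral_prod_mul fexp fexp A B

lemma int_prod3 (A : Set ℝ) (S : Set (ℝ × ℝ)) :
    ∫ p in A ×ˢ S, dens3 p
      = (∫ x in A, fexp x) * (∫ q in S, fexp q.1 * fexp q.2) := by
  simp_rw [dens3_eq]
  rw [MeasureTheory.Measure.volume_eq_prod]
  exact setIntegral_prod_mul fexp (fun q : ℝ × ℝ => fexp q.1 * fexp q.2) A S

lemma g_intOn {B C : Set ℝ} (hB : B ⊆ Ioi 0) (hC : C ⊆ Ioi 0) :
    IntegrableOn (fun q : ℝ × ℝ => fexp q.1 * fexp q.2) (B ×ˢ C) := by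
  rw [IntegrableOn, MeasureTheory.Measure.volume_eq_prod, ← Measure.prod_restrict]
  exact (fexp_intOn hB).mul_prod (fexp_intOn hC)

theorem stmt19 (L1 L2 Lc σ2 γ1 γ2 ε1 ε2 : ℝ) (hL1 : 0 < L1) (hL2 : 0 < L2) (hLc : 0 < Lc)
    (hσ : 0 < σ2) (hγ1 : γ1 ∈ Set.Ioo (0:ℝ) 1) (hγ2 : γ2 ∈ Set.Ioo (0:ℝ) 1)
    (hsum : γ1 + γ2 = 1) (hε1 : 0 < ε1) (hε2 : 0 < ε2)
    (hth : ε1 < γ1 / γ2) (hth2 : ε2 / γ2 < ε1 / (γ1 - ε1 * γ2)) :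
    (∫ p in {p : ℝ × ℝ × ℝ | 0 < p.1 ∧ 0 < p.2.1 ∧ 0 < p.2.2 ∧
        (γ2 * L2 * p.2.1 / (2 * σ2) < ε2 ∨
          γ1 * L2 * p.2.1 / (γ2 * L2 * p.2.1 + 2 * σ2) < ε1) ∧
        γ1 * L1 * p.1 / (γ2 * L1 * p.1 + 2 * σ2) < ε1}, dens3 p)
    + (∫ p in {p : ℝ × ℝ × ℝ | 0 < p.1 ∧ 0 < p.2.1 ∧ 0 < p.2.2 ∧
        (γ2 * L2 * p.2.1 / (2 * σ2) < ε2 ∨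
          max (γ1 * L2 * p.2.1 / (γ2 * L2 * p.2.1 + 2 * σ2)) (Lc * p.2.2 / (2 * σ2)) < ε1) ∧
        ε1 < γ1 * L1 * p.1 / (γ2 * L1 * p.1 + 2 * σ2)}, dens3 p)
    = (1 - Real.exp (-(σ2 * ε1 / (γ1 - ε1 * γ2)) / L2))
      - Real.exp (-(σ2 * ε1) / Lc - (σ2 * ε1 / (γ1 - ε1 * γ2)) / L1) *
        (Real.exp (-(σ2 * ε2) / (γ2 * L2)) - Real.exp (-(σ2 * ε1 / (γ1 - ε1 * γ2)) / L2)) := by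
  obtain ⟨hγ1p, _⟩ := hγ1
  obtain ⟨hγ2p, _⟩ := hγ2
  have hd : 0 < γ1 - ε1 * γ2 := by
    have h := (lt_div_iff₀ hγ2p).mp hth
    linarith
  have hξpos : 0 < σ2 * ε1 / (γ1 - ε1 * γ2) := div_pos (mul_pos hσ hε1) hd
  have ht1pos : 0 < 2*(σ2*ε1/(γ1-ε1*γ2))/L1 := by
    exact div_pos (by linarith) hL1
  have hbpos : 0 < 2*(σ2*ε1/(γ1-ε1*γ2))/L2 := div_pos (by linarith) hL2
  have hapos : 0 < 2*(σ2*ε2)/(γ2*L2) := div_pos (by positivity) (mul_pos hγ2p hL2)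
  have hcpos : 0 < 2*(σ2*ε1)/Lc := div_pos (by positivity) hLc
  have hab : 2*(σ2*ε2)/(γ2*L2) < 2*(σ2*ε1/(γ1-ε1*γ2))/L2 := by
    have h2' : ε2 * (γ1-ε1*γ2) < ε1 * γ2 := by
      rw [div_lt_div_iff₀ hγ2p hd] at hth2; exact hth2
    have hb' : 2*(σ2*ε1/(γ1-ε1*γ2))/L2 = 2*(σ2*ε1)/((γ1-ε1*γ2)*L2) := by
      field_simp
    rw [hb', div_lt_div_iff₀ (mul_pos hγ2p hL2) (mul_pos hd hL2)]
    nlinarith [mul_pos hσ hL2]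
  -- set equalities
  have hS1 : {p : ℝ × ℝ × ℝ | 0 < p.1 ∧ 0 < p.2.1 ∧ 0 < p.2.2 ∧
        (γ2 * L2 * p.2.1 / (2 * σ2) < ε2 ∨
          γ1 * L2 * p.2.1 / (γ2 * L2 * p.2.1 + 2 * σ2) < ε1) ∧
        γ1 * L1 * p.1 / (γ2 * L1 * p.1 + 2 * σ2) < ε1}
      = Ioo 0 (2*(σ2*ε1/(γ1-ε1*γ2))/L1) ×ˢ
          (Ioo 0 (2*(σ2*ε1/(γ1-ε1*γ2))/L2) ×ˢ Ioi 0) := by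
    ext ⟨x, y, z⟩
    simp only [mem_setOf_eq, mem_prod, mem_Ioo, mem_Ioi]
    constructor
    · rintro ⟨hx, hy, hz, hdisj, hV1⟩
      refine ⟨⟨hx, (cond_lt hσ hγ2p hL1 hd hx).mp hV1⟩, ⟨hy, ?_⟩, hz⟩
      rcases hdisj with h | h
      · exact lt_trans ((cond_simple hσ (mul_pos hγ2p hL2)).mp h) hab
      · exact (cond_lt hσ hγ2p hL2 hd hy).mp h
    · rintro ⟨⟨hx, hx2⟩, ⟨hy, hy2⟩, hz⟩
      exact ⟨hx, hy, hz, Or.inr ((cond_lt hσ hγ2p hL2 hd hy).mpr hy2),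
        (cond_lt hσ hγ2p hL1 hd hx).mpr hx2⟩
  have hS2 : {p : ℝ × ℝ × ℝ | 0 < p.1 ∧ 0 < p.2.1 ∧ 0 < p.2.2 ∧
        (γ2 * L2 * p.2.1 / (2 * σ2) < ε2 ∨
          max (γ1 * L2 * p.2.1 / (γ2 * L2 * p.2.1 + 2 * σ2)) (Lc * p.2.2 / (2 * σ2)) < ε1) ∧
        ε1 < γ1 * L1 * p.1 / (γ2 * L1 * p.1 + 2 * σ2)}
      = Ioi (2*(σ2*ε1/(γ1-ε1*γ2))/L1) ×ˢ
          ((Ioo 0 (2*(σ2*ε2)/(γ2*L2)) ×ˢ Ioi 0) ∪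
           (Ico (2*(σ2*ε2)/(γ2*L2)) (2*(σ2*ε1/(γ1-ε1*γ2))/L2) ×ˢ
             Ioo 0 (2*(σ2*ε1)/Lc))) := by
    ext ⟨x, y, z⟩
    simp only [mem_setOf_eq, mem_prod, mem_Ioi, mem_Ioo, mem_Ico, mem_union, max_lt_iff]
    constructor
    · rintro ⟨hx, hy, hz, hdisj, hV1⟩
      refine ⟨(cond_gt hσ hγ2p hL1 hd hx).mp hV1, ?_⟩
      rcases hdisj with h | ⟨h1, h2⟩
      · exact Or.inl ⟨⟨hy, (cond_simple hσ (mul_pos hγ2p hL2)).mp h⟩, hz⟩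
      · by_cases hya : y < 2*(σ2*ε2)/(γ2*L2)
        · exact Or.inl ⟨⟨hy, hya⟩, hz⟩
        · exact Or.inr ⟨⟨not_lt.mp hya, (cond_lt hσ hγ2p hL2 hd hy).mp h1⟩,
            hz, (cond_simple hσ hLc).mp h2⟩
    · rintro ⟨hx, ⟨⟨hy, hya⟩, hz⟩ | ⟨⟨hya, hyb⟩, hz, hzc⟩⟩
      · exact ⟨lt_trans ht1pos hx, hy, hz,
          Or.inl ((cond_simple hσ (mul_pos hγ2p hL2)).mpr hya),
          (cond_gt hσ hγ2p hL1 hd (lt_trans ht1pos hx)).mpr hx⟩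
      · have hy0 : 0 < y := lt_of_lt_of_le hapos hya
        exact ⟨lt_trans ht1pos hx, hy0, hz,
          Or.inr ⟨(cond_lt hσ hγ2p hL2 hd hy0).mpr hyb, (cond_simple hσ hLc).mpr hzc⟩,
          (cond_gt hσ hγ2p hL1 hd (lt_trans ht1pos hx)).mpr hx⟩
  rw [hS1, hS2]
  rw [show (Ioo 0 (2*(σ2*ε1/(γ1-ε1*γ2))/L1) ×ˢ
      (Ioo 0 (2*(σ2*ε1/(γ1-ε1*γ2))/L2) ×ˢ Ioi 0)) =
      Ioo 0 (2*(σ2*ε1/(γ1-ε1*γ2))/L1) ×ˢ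
      ((Ioo 0 (2*(σ2*ε1/(γ1-ε1*γ2))/L2) ×ˢ Ioi (0:ℝ)) : Set (ℝ × ℝ)) from rfl]
  rw [int_prod3, int_prod3]
  have hdisjoint : Disjoint (Ioo 0 (2*(σ2*ε2)/(γ2*L2)) ×ˢ Ioi (0:ℝ))
      (Ico (2*(σ2*ε2)/(γ2*L2)) (2*(σ2*ε1/(γ1-ε1*γ2))/L2) ×ˢ Ioo 0 (2*(σ2*ε1)/Lc)) := by
    rw [Set.disjoint_left]
    rintro ⟨y, z⟩ hq1 hq2
    rw [Set.mem_prod] at hq1 hq2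
    exact absurd hq1.1.2 (not_lt.mpr hq2.1.1)
  rw [setIntegral_union hdisjoint (measurableSet_Ico.prod measurableSet_Ioo)
    (g_intOn Ioo_subset_Ioi_self Subset.rfl)
    (g_intOn (fun x hx => lt_of_lt_of_le hapos hx.1) Ioo_subset_Ioi_self)]
  rw [int_prod2, int_prod2, int_prod2]
  rw [fexp_int_Ioo (le_of_lt ht1pos), fexp_int_Ioo (le_of_lt hbpos),
    fexp_int_Ioi, fexp_int_Ioi, fexp_int_Ioo (le_of_lt hapos),
    fexp_int_Ico (le_of_lt hab), fexp_int_Ioo (le_of_lt hcpos)]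
  have e0 : Real.exp (-(0:ℝ)/2) = 1 := by norm_num
  rw [e0]
  have eT1 : Real.exp (-(2*(σ2*ε1/(γ1-ε1*γ2))/L1)/2)
      = Real.exp (-(σ2 * ε1 / (γ1 - ε1 * γ2)) / L1) := by congr 1; ring
  have eB : Real.exp (-(2*(σ2*ε1/(γ1-ε1*γ2))/L2)/2)
      = Real.exp (-(σ2 * ε1 / (γ1 - ε1 * γ2)) / L2) := by congr 1; ring
  have eA : Real.exp (-(2*(σ2*ε2)/(γ2*L2))/2) = Real.exp (-(σ2 * ε2) / (γ2 * L2)) := by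
    congr 1; ring
  have eC : Real.exp (-(2*(σ2*ε1)/Lc)/2) = Real.exp (-(σ2 * ε1) / Lc) := by
    congr 1; ring
  rw [eT1, eB, eA, eC]
  have eProd : Real.exp (-(σ2 * ε1) / Lc - σ2 * ε1 / (γ1 - ε1 * γ2) / L1)
      = Real.exp (-(σ2 * ε1) / Lc) * Real.exp (-(σ2 * ε1 / (γ1 - ε1 * γ2)) / L1) := by
    rw [← Real.exp_add]; congr 1; ring
  rw [eProd]
  ring
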